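/- Let (Z, Y, H, X) be a pre-wreath structure, let G be a subgroup of Sym(Z) whose support is contained in X, and let N be a normal subgroup of ⟨G, H⟩. If N contains an element n such that An ≠ A for some set A in the carrier XH (i.e., the permutation induced by n on XH is nontrivial), then there exists a subgroup S of N together with a surjective group homomorphism from S onto G. -/

import Mathlib

/-- A pre-wreath structure `(Z, Y, H, X)`: `H` is a nontrivial subgroup of `Sym(Z)`,
`X ⊆ Y ⊆ Z`, `X` nonempty, every element of `H` fixes every point outside `Y`,
if `Xh` meets `X` then `h` is the identity on `X`, and every nontrivial `h ∈ H`
moves some set `Xj` (`j ∈ H`). (Images are written with Lean's left action, so the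
set `Xh` of the paper is `⇑h '' X`.) -/
def IsPreWreath {Z : Type*} (Y : Set Z) (H : Subgroup (Equiv.Perm Z)) (X : Set Z) : Prop :=
  H ≠ ⊥ ∧
  (∀ h ∈ H, ∀ z : Z, z ∉ Y → h z = z) ∧
  X ⊆ Y ∧
  X.Nonempty ∧
  (∀ h ∈ H, (⇑h '' X ∩ X).Nonempty → ∀ x ∈ X, h x = x) ∧
  (∀ h ∈ H, h ≠ 1 → ∃ j ∈ H, ⇑h '' (⇑j '' X) ≠ ⇑j '' X)

/-- The carrier `XH = {Xh : h ∈ H}` of a pre-wreath structure. -/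
def wreathCarrier {Z : Type*} (H : Subgroup (Equiv.Perm Z)) (X : Set Z) : Set (Set Z) :=
  {A : Set Z | ∃ h ∈ H, A = ⇑h '' X}

/-- The support of a subgroup of `Sym(Z)`: the points moved by some element. -/
def Supp {Z : Type*} (K : Subgroup (Equiv.Perm Z)) : Set Z :=
  {z : Z | ∃ g ∈ K, g z ≠ z}

/-- Let `(Z, Y, H, X)` be a pre-wreath structure, `G ≤ Sym(Z)` with
support in `X`, and `N` a normal subgroup of `⟨G, H⟩`.  If some element of `N` induces a
nontrivial permutation of the carrier `XH`, then some subgroup of `N` surjects onto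
`G`. -/
theorem stmt8 {Z : Type*} (Y X : Set Z) (H G : Subgroup (Equiv.Perm Z))
    (hpw : IsPreWreath Y H X) (hG : Supp G ⊆ X)
    (N : Subgroup (Equiv.Perm Z)) (hNle : N ≤ G ⊔ H)
    (hNnormal : ∀ w ∈ G ⊔ H, ∀ n ∈ N, w * n * w⁻¹ ∈ N)
    (hmove : ∃ n ∈ N, ∃ A ∈ wreathCarrier H X, ⇑n '' A ≠ A) :
    ∃ S : Subgroup (Equiv.Perm Z), S ≤ N ∧
      ∃ φ : S →* G, Function.Surjective φ := by
  classical
  obtain ⟨hHne, hfixY, hXY, hXne, hmeet, hfaith⟩ := hpw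
  obtain ⟨n, hnN, A, ⟨k, hkH, rfl⟩, hnA⟩ := hmove
  -- image under a product
  have himg : ∀ (a b : Equiv.Perm Z) (s : Set Z), ⇑(a * b) '' s = ⇑a '' (⇑b '' s) := by
    intro a b s
    rw [Equiv.Perm.coe_mul, Set.image_comp]
  have hone : ⇑(1 : Equiv.Perm Z) '' X = X := by simp
  -- an element of H that fixes X pointwise maps X onto X
  have hXid : ∀ h : Equiv.Perm Z, (∀ x ∈ X, h x = x) → ⇑h '' X = X := by
    intro h hid
    calc ⇑h '' X = id '' X := Set.image_congr hid
    _ = X := Set.image_id X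
  -- L1: two carrier sets that meet are equal
  have L1 : ∀ h₁ ∈ H, ∀ h₂ ∈ H, (⇑h₁ '' X ∩ ⇑h₂ '' X).Nonempty → ⇑h₁ '' X = ⇑h₂ '' X := by
    intro h₁ m₁ h₂ m₂ hne
    obtain ⟨y, hy1, hy2⟩ := hne
    have hmemH : h₂⁻¹ * h₁ ∈ H := mul_mem (inv_mem m₂) m₁
    have hne2 : (⇑(h₂⁻¹ * h₁) '' X ∩ X).Nonempty := by
      refine ⟨h₂⁻¹ y, ?_, ?_⟩
      · rw [himg]
        exact Set.mem_image_of_mem _ hy1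
      · obtain ⟨x, hx, rfl⟩ := hy2
        simpa using hx
    have hid := hmeet _ hmemH hne2
    have hXeq : ⇑(h₂⁻¹ * h₁) '' X = X := hXid _ hid
    have : ⇑h₂ '' (⇑(h₂⁻¹ * h₁) '' X) = ⇑h₂ '' X := by rw [hXeq]
    rw [← himg] at this
    have hcalc : h₂ * (h₂⁻¹ * h₁) = h₁ := by group
    rwa [hcalc] at this
  -- every element of G fixes every point outside X
  have gfix : ∀ g ∈ G, ∀ z : Z, z ∉ X → g z = z := by
    intro g hg z hz
    by_contra hc
    exact hz (hG ⟨g, hg, hc⟩)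
  -- every element of G maps X onto X
  have gXsub : ∀ g ∈ G, ⇑g '' X ⊆ X := by
    rintro g hg _ ⟨x, hx, rfl⟩
    by_contra hgx
    have h1 : g (g x) = g x := gfix g hg (g x) hgx
    have h2 : g x = x := g.injective h1
    rw [h2] at hgx
    exact hgx hx
  have gXeq : ∀ g ∈ G, ⇑g '' X = X := by
    intro g hg
    refine Set.Subset.antisymm (gXsub g hg) ?_
    intro x hx
    have h1 : g⁻¹ x ∈ X := gXsub g⁻¹ (inv_mem hg) ⟨x, hx, rfl⟩
    exact ⟨g⁻¹ x, h1, by simp⟩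
  -- L2: every element of G fixes every carrier set
  have L2 : ∀ g ∈ G, ∀ h ∈ H, ⇑g '' (⇑h '' X) = ⇑h '' X := by
    intro g hg h hh
    by_cases hc : (⇑h '' X ∩ X).Nonempty
    · rw [hXid h (hmeet h hh hc)]
      exact gXeq g hg
    · have hd : ∀ z ∈ ⇑h '' X, z ∉ X := fun z hz hzX => hc ⟨z, hz, hzX⟩
      calc ⇑g '' (⇑h '' X) = id '' (⇑h '' X) :=
            Set.image_congr fun z hz => gfix g hg z (hd z hz)
      _ = ⇑h '' X := Set.image_id _
  -- L3: every element of G ⊔ H maps carrier sets to carrier sets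
  have L3 : ∀ w ∈ G ⊔ H, ∀ h ∈ H, ∃ h' ∈ H, ⇑w '' (⇑h '' X) = ⇑h' '' X := by
    have key : ∀ w ∈ G ⊔ H,
        (∀ h ∈ H, ∃ h' ∈ H, ⇑w '' (⇑h '' X) = ⇑h' '' X) ∧
        (∀ h ∈ H, ∃ h' ∈ H, ⇑w⁻¹ '' (⇑h '' X) = ⇑h' '' X) := by
      intro w hw
      rw [Subgroup.sup_eq_closure] at hw
      induction hw using Subgroup.closure_induction with
      | mem x hx =>
          rcases hx with hx | hx
          · constructor
            · intro h hh
              exact ⟨h, hh, L2 x hx h hh⟩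
            · intro h hh
              exact ⟨h, hh, L2 x⁻¹ (inv_mem hx) h hh⟩
          · constructor
            · intro h hh
              exact ⟨x * h, mul_mem hx hh, (himg x h X).symm⟩
            · intro h hh
              exact ⟨x⁻¹ * h, mul_mem (inv_mem hx) hh, (himg x⁻¹ h X).symm⟩
      | one =>
          constructor <;>
            · intro h hh
              exact ⟨h, hh, by simp⟩
      | mul a b _ _ ha hb =>
          constructor
          · intro h hh
            obtain ⟨h₁, hh₁, e₁⟩ := hb.1 h hh
            obtain ⟨h₂, hh₂, e₂⟩ := ha.1 h₁ hh₁
            exact ⟨h₂, hh₂, by rw [himg, e₁, e₂]⟩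
          · intro h hh
            obtain ⟨h₁, hh₁, e₁⟩ := ha.2 h hh
            obtain ⟨h₂, hh₂, e₂⟩ := hb.2 h₁ hh₁
            refine ⟨h₂, hh₂, ?_⟩
            rw [mul_inv_rev, himg, e₁, e₂]
      | inv a _ ha =>
          exact ⟨ha.2, by simpa using ha.1⟩
    intro w hw
    exact (key w hw).1
  -- the conjugated element n₁ ∈ N with n₁ '' X disjoint from X
  set n₁ : Equiv.Perm Z := k⁻¹ * n * k with hn₁def
  have hkW : (k : Equiv.Perm Z)⁻¹ ∈ G ⊔ H := (le_sup_right : H ≤ G ⊔ H) (inv_mem hkH)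
  have hn₁N : n₁ ∈ N := by
    have := hNnormal k⁻¹ hkW n hnN
    rwa [inv_inv] at this
  have hn₁ne : ⇑n₁ '' X ≠ X := by
    intro hEq
    apply hnA
    have hcalc : k * n₁ = n * k := by rw [hn₁def]; group
    calc ⇑n '' (⇑k '' X) = ⇑(n * k) '' X := (himg n k X).symm
    _ = ⇑(k * n₁) '' X := by rw [hcalc]
    _ = ⇑k '' (⇑n₁ '' X) := himg k n₁ X
    _ = ⇑k '' X := by rw [hEq]
  have hn₁W : n₁ ∈ G ⊔ H := hNle hn₁N
  obtain ⟨h', hh'H, hh'⟩ := L3 n₁ hn₁W 1 (one_mem H)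
  rw [hone] at hh'
  -- disjointness
  have hdisj : ∀ z ∈ ⇑n₁ '' X, z ∉ X := by
    intro z hz hzX
    apply hn₁ne
    rw [hh']
    have := L1 h' hh'H 1 (one_mem H) ⟨z, by rw [← hh']; exact hz, by rw [hone]; exact hzX⟩
    rw [this, hone]
  -- conjugates of G by n₁ fix X pointwise
  have hsupθ : ∀ g ∈ G, ∀ z ∈ X, (n₁ * g * n₁⁻¹) z = z := by
    intro g hg z hz
    have h1 : n₁⁻¹ z ∉ X := by
      intro hc
      exact hdisj z ⟨n₁⁻¹ z, hc, by simp⟩ hz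
    rw [Equiv.Perm.mul_apply, Equiv.Perm.mul_apply, gfix g hg _ h1]
    simp
  -- conjugates of G by n₁ commute with G
  have hcomm : ∀ g ∈ G, ∀ g' ∈ G, (n₁ * g * n₁⁻¹) * g' = g' * (n₁ * g * n₁⁻¹) := by
    intro g hg g' hg'
    have hd : Equiv.Perm.Disjoint (n₁ * g * n₁⁻¹) g' := by
      intro z
      by_cases hz : z ∈ X
      · exact Or.inl (hsupθ g hg z hz)
      · exact Or.inr (gfix g' hg' z hz)
    exact hd.commute.eq
  -- the homomorphism Ψ : G × G → Perm Z, (g, g') ↦ g · n₁ g' n₁⁻¹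
  let Ψ : ↥G × ↥G →* Equiv.Perm Z :=
  { toFun := fun p => (p.1 : Equiv.Perm Z) * (n₁ * (p.2 : Equiv.Perm Z) * n₁⁻¹)
    map_one' := by simp
    map_mul' := by
      rintro ⟨g, g'⟩ ⟨h, h'⟩
      simp only [Prod.mk_mul_mk, Subgroup.coe_mul]
      have hc := hcomm (g' : Equiv.Perm Z) g'.2 (h : Equiv.Perm Z) h.2
      rw [show (g : Equiv.Perm Z) * (n₁ * (g' : Equiv.Perm Z) * n₁⁻¹) *
            ((h : Equiv.Perm Z) * (n₁ * (h' : Equiv.Perm Z) * n₁⁻¹)) =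
          (g : Equiv.Perm Z) * ((n₁ * (g' : Equiv.Perm Z) * n₁⁻¹) * (h : Equiv.Perm Z)) *
            (n₁ * (h' : Equiv.Perm Z) * n₁⁻¹) by group, hc]
      group }
  have hΨ_apply : ∀ p : ↥G × ↥G,
      Ψ p = (p.1 : Equiv.Perm Z) * (n₁ * (p.2 : Equiv.Perm Z) * n₁⁻¹) := fun _ => rfl
  have hinj : Function.Injective Ψ := by
    rw [injective_iff_map_eq_one]
    rintro ⟨g, g'⟩ h1
    rw [hΨ_apply] at h1
    have hg1 : (g : Equiv.Perm Z) = 1 := by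
      ext z
      by_cases hz : z ∈ X
      · have h2 := congrArg (fun f : Equiv.Perm Z => f z) h1
        simp only [Equiv.Perm.mul_apply, Equiv.Perm.one_apply] at h2
        have h3 : (n₁ * (g' : Equiv.Perm Z) * n₁⁻¹) z = z := hsupθ _ g'.2 z hz
        simp only [Equiv.Perm.mul_apply] at h3
        rw [h3] at h2
        simpa using h2
      · simpa using gfix _ g.2 z hz
    rw [hg1, one_mul] at h1
    have hg'1 : (g' : Equiv.Perm Z) = 1 := by
      have h2 := congrArg (fun w => n₁⁻¹ * w * n₁) h1
      simpa [mul_assoc] using h2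
    exact Prod.ext (Subtype.ext hg1) (Subtype.ext hg'1)
  -- the subgroup S and the projection
  refine ⟨N ⊓ Ψ.range, inf_le_left, ?_⟩
  let e : (↥G × ↥G) ≃* Ψ.range := MonoidHom.ofInjective hinj
  refine ⟨((MonoidHom.fst ↥G ↥G).comp e.symm.toMonoidHom).comp
      (Subgroup.inclusion inf_le_right), ?_⟩
  intro g
  have hgW : (g : Equiv.Perm Z) ∈ G ⊔ H := (le_sup_left : G ≤ G ⊔ H) g.2
  have hwN : Ψ (g, g⁻¹) ∈ N := by
    have h1 : (g : Equiv.Perm Z) * n₁ * (g : Equiv.Perm Z)⁻¹ ∈ N := hNnormal _ hgW n₁ hn₁N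
    have h2 : Ψ (g, g⁻¹) = ((g : Equiv.Perm Z) * n₁ * (g : Equiv.Perm Z)⁻¹) * n₁⁻¹ := by
      rw [hΨ_apply]
      simp [mul_assoc]
    rw [h2]
    exact mul_mem h1 (inv_mem hn₁N)
  have hwR : Ψ (g, g⁻¹) ∈ Ψ.range := ⟨(g, g⁻¹), rfl⟩
  refine ⟨⟨Ψ (g, g⁻¹), hwN, hwR⟩, ?_⟩
  have hsymm : e.symm ⟨Ψ (g, g⁻¹), hwR⟩ = (g, g⁻¹) := by
    rw [MulEquiv.symm_apply_eq]
    exact Subtype.ext (MonoidHom.ofInjective_apply hinj).symm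
  simp only [MonoidHom.comp_apply]
  have hincl : Subgroup.inclusion (inf_le_right : N ⊓ Ψ.range ≤ Ψ.range)
      ⟨Ψ (g, g⁻¹), hwN, hwR⟩ = ⟨Ψ (g, g⁻¹), hwR⟩ := rfl
  rw [hincl]
  rw [MulEquiv.coe_toMonoidHom, hsymm]
  rfl
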